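/- Let R be a commutative ring in which 2 is invertible. Then the chromatic number of the regular graph on SL₂(R) (x ~ y iff det(x+y) = 0) is at least the chromatic number of the hyperbola graph Cay(R², {(x,y) : xy = 1}). -/

import Mathlib

/-- The regular graph on `SL_n(R)`: distinct `x, y` are adjacent iff `det(x+y) = 0`. -/
def regGraph (n : ℕ) (R : Type) [CommRing R] :
    SimpleGraph (Matrix.SpecialLinearGroup (Fin n) R) where
  Adj x y := x ≠ y ∧ ((x : Matrix (Fin n) (Fin n) R) + y).det = 0
  symm := ⟨by
    rintro x y ⟨h1, h2⟩
    exact ⟨h1.symm, by rwa [add_comm]⟩⟩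
  loopless := ⟨fun x h => h.1 rfl⟩

/-- The hyperbola graph `H(R) = Cay(R², {(x,y) : xy = 1})`. -/
def hgraph (R : Type) [CommRing R] : SimpleGraph (R × R) :=
  SimpleGraph.fromRel (fun v w => (w.1 - v.1) * (w.2 - v.2) = 1)

/-- The embedding map `R² → SL₂(R)`. -/
def hmap {R : Type} [CommRing R] (v : R × R) :
    Matrix.SpecialLinearGroup (Fin 2) R :=
  ⟨!![2 * v.1, 4 * (v.1 * v.2) - 1; 1, 2 * v.2], by
    simp [Matrix.det_fin_two_of]; ring⟩

theorem hmap_hom {R : Type} [CommRing R] (h2 : IsUnit (2 : R)) {v w : R × R}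
    (h : (hgraph R).Adj v w) : (regGraph 2 R).Adj (hmap v) (hmap w) := by
  rw [hgraph, SimpleGraph.fromRel_adj] at h
  obtain ⟨hne, hrel⟩ := h
  have key : (w.1 - v.1) * (w.2 - v.2) = 1 := by
    rcases hrel with h | h
    · exact h
    · linear_combination h
  constructor
  · intro heq
    apply hne
    have this : (hmap v : Matrix (Fin 2) (Fin 2) R) = hmap w := congrArg Subtype.val heq
    have h00 := congrFun (congrFun this 0) 0
    have h11 := congrFun (congrFun this 1) 1
    simp [hmap] at h00 h11
    have e1 : v.1 = w.1 := h2.mul_right_injective (by linear_combination h00)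
    have e2 : v.2 = w.2 := h2.mul_right_injective (by linear_combination h11)
    exact Prod.ext e1 e2
  · show (((hmap v : Matrix (Fin 2) (Fin 2) R)) + hmap w).det = 0
    simp [hmap, Matrix.det_fin_two, Matrix.add_apply]
    linear_combination (-4 : R) * key

/-- If `2` is invertible in the commutative ring `R`, then the chromatic number of
the regular graph on `SL₂(R)` is at least that of the hyperbola graph `H(R)`. -/
theorem chromatic_regular_ge_hyperbola {R : Type} [CommRing R]
    (h2 : IsUnit (2 : R)) :
    (hgraph R).chromaticNumber ≤ (regGraph 2 R).chromaticNumber := by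
  apply SimpleGraph.chromaticNumber_le_of_forall_imp
  intro n ⟨C⟩
  exact ⟨C.comp ⟨hmap, fun h => hmap_hom h2 h⟩⟩
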